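/- Let E be a finite-dimensional real normed vector space, P ⊆ E a nonempty H-polyhedron, and let σ be a nonempty exposed face of the recession cone rec(P). Then there exists a nonempty exposed face F of P with rec(F) = σ. -/

import Mathlib

/-- A set is an H-polyhedron if it is the set of solutions of finitely many linear
inequalities `f i x ≥ b i`. -/
def IsHPolyhedron {E : Type*} [AddCommGroup E] [Module ℝ E] (P : Set E) : Prop :=
  ∃ (ι : Type) (_ : Finite ι) (f : ι → E →ₗ[ℝ] ℝ) (b : ι → ℝ),
    P = {x : E | ∀ i, b i ≤ f i x}

/-- The recession cone of a set `X`: all directions `v` with `x + t • v ∈ X`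
for every `x ∈ X` and `t ≥ 0`. -/
def recCone {E : Type*} [AddCommGroup E] [Module ℝ E] (X : Set E) : Set E :=
  {v : E | ∀ x ∈ X, ∀ t : ℝ, 0 ≤ t → x + t • v ∈ X}

/-- The recession cone of a nonempty H-polyhedron is cut out by the homogeneous
versions of the inequalities. -/
lemma recCone_halfspaces {E : Type*} [AddCommGroup E] [Module ℝ E] {ι : Type*}
    (f : ι → E →ₗ[ℝ] ℝ) (b : ι → ℝ) (hne : {x : E | ∀ i, b i ≤ f i x}.Nonempty) :
    recCone {x : E | ∀ i, b i ≤ f i x} = {v : E | ∀ i, 0 ≤ f i v} := by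
  ext v
  constructor
  · intro hv i
    obtain ⟨x₀, hx₀⟩ := hne
    by_contra h
    push_neg at h
    have hden : 0 < -(f i v) := by linarith
    set t := (f i x₀ - b i + 1) / (-(f i v)) with ht
    have htnn : 0 ≤ t := div_nonneg (by linarith [hx₀ i]) hden.le
    have hmem := hv x₀ hx₀ t htnn i
    simp only [map_add, map_smul, smul_eq_mul] at hmem
    have hcancel : t * (-(f i v)) = f i x₀ - b i + 1 := div_mul_cancel₀ _ hden.ne'
    nlinarith
  · intro hv x hx t ht i
    simp only [Set.mem_setOf_eq, map_add, map_smul, smul_eq_mul]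
    have := hx i
    have := mul_nonneg ht (hv i)
    linarith

universe u

/-- Linear programming attainment: if a linear functional is nonpositive on the
recession cone of a nonempty H-polyhedron, it attains its maximum there. -/
theorem lp_attain (n : ℕ) :
    ∀ (E : Type u) [AddCommGroup E] [Module ℝ E] [FiniteDimensional ℝ E],
      Module.finrank ℝ E ≤ n →
      ∀ (ι : Type) [Finite ι] (f : ι → E →ₗ[ℝ] ℝ) (b : ι → ℝ) (l : E →ₗ[ℝ] ℝ),
        (∃ x : E, ∀ i, b i ≤ f i x) →
        (∀ v : E, (∀ i, 0 ≤ f i v) → l v ≤ 0) →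
        ∃ x, (∀ i, b i ≤ f i x) ∧ ∀ y, (∀ i, b i ≤ f i y) → l y ≤ l x := by
  induction n using Nat.strong_induction_on with
  | _ n IH =>
  intro E _ _ _ hrank ι _ f b l hne hcone
  classical
  obtain ⟨x₀, hx₀⟩ := hne
  -- Reduction lemma: maximize over the face where constraint j is tight.
  have reduce : ∀ j : ι, f j ≠ 0 → ∀ w : E, (∀ i, b i ≤ f i w) → f j w = b j →
      ∃ m, (∀ i, b i ≤ f i m) ∧ f j m = b j ∧
        ∀ y, (∀ i, b i ≤ f i y) → f j y = b j → l y ≤ l m := by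
    intro j hj w hw hwj
    set K := LinearMap.ker (f j) with hK
    have hKlt : Module.finrank ℝ K < n := by
      have h1 : Module.finrank ℝ K < Module.finrank ℝ E :=
        Submodule.finrank_lt (fun h => hj (LinearMap.ker_eq_top.mp h))
      omega
    obtain ⟨y', hy1, hy2⟩ := IH (Module.finrank ℝ K) hKlt K le_rfl ι
      (fun i => (f i).comp K.subtype) (fun i => b i - f i w) (l.comp K.subtype)
      ⟨0, fun i => by simpa using hw i⟩
      (fun v hv => hcone v hv)
    refine ⟨w + (y' : E), ?_, ?_, ?_⟩
    · intro i
      have := hy1 i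
      simp only [LinearMap.comp_apply, Submodule.coe_subtype] at this
      simp only [map_add]
      linarith
    · have : f j (y' : E) = 0 := y'.2
      simp [map_add, this, hwj]
    · intro y hy hyj
      have hyK : y - w ∈ K := by
        simp only [hK, LinearMap.mem_ker, map_sub, hyj, hwj, sub_self]
      have hfeas : ∀ i, b i - f i w ≤ ((f i).comp K.subtype) ⟨y - w, hyK⟩ := by
        intro i
        simp only [LinearMap.comp_apply, Submodule.coe_subtype, map_sub]
        linarith [hy i]
      have := hy2 ⟨y - w, hyK⟩ hfeas
      simp only [LinearMap.comp_apply, Submodule.coe_subtype, map_sub, map_add] at this ⊢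
      linarith
  by_cases htight : ∃ j, f j ≠ 0 ∧ ∀ x : E, (∀ i, b i ≤ f i x) → f j x = b j
  · obtain ⟨j, hj, hall⟩ := htight
    obtain ⟨m, hm1, _, hm3⟩ := reduce j hj x₀ hx₀ (hall x₀ hx₀)
    exact ⟨m, hm1, fun y hy => hm3 y hy (hall y hy)⟩
  push_neg at htight
  -- every nonzero constraint has a strictly feasible point
  have hxs : ∀ j : ι, ∃ x, (∀ i, b i ≤ f i x) ∧ (f j ≠ 0 → b j < f j x) := by
    intro j
    by_cases hj : f j = 0
    · exact ⟨x₀, hx₀, fun h => absurd hj h⟩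
    · obtain ⟨x, hx, hne'⟩ := htight j hj
      exact ⟨x, hx, fun _ => lt_of_le_of_ne (hx j) (Ne.symm hne')⟩
  choose xs hxs1 hxs2 using hxs
  have : Fintype ι := Fintype.ofFinite ι
  by_cases hcard : (Finset.univ : Finset ι).Nonempty
  swap
  · -- ι is empty: l must vanish
    have hι : IsEmpty ι := by
      by_contra h
      rw [not_isEmpty_iff] at h
      exact hcard ⟨h.some, Finset.mem_univ _⟩
    have hl : ∀ v : E, l v ≤ 0 := fun v => hcone v (fun i => hι.elim i)
    refine ⟨x₀, fun i => hι.elim i, fun y _ => ?_⟩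
    have h1 := hl (y - x₀)
    have h2 := hl (x₀ - y)
    simp only [map_sub] at h1 h2
    linarith
  -- Slater point: centroid of the strictly feasible points
  set N : ℝ := ((Finset.univ : Finset ι).card : ℝ) with hN
  have hNpos : 0 < N := by
    simp only [hN]
    exact_mod_cast Finset.card_pos.mpr hcard
  set xb : E := N⁻¹ • ∑ j, xs j with hxb
  have hxbfeas : ∀ i, b i ≤ f i xb := by
    intro i
    have hsum : N * b i ≤ ∑ j, f i (xs j) := by
      have : ∑ j : ι, b i ≤ ∑ j, f i (xs j) :=
        Finset.sum_le_sum fun j _ => hxs1 j i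
      simpa [mul_comm, hN] using this
    have : f i xb = N⁻¹ * ∑ j, f i (xs j) := by
      simp [hxb, map_smul, map_sum]
    rw [this]
    have h2 := mul_le_mul_of_nonneg_left hsum (inv_nonneg.mpr hNpos.le)
    have h3 : N⁻¹ * (N * b i) = b i := by field_simp
    linarith
  have hxbslater : ∀ j : ι, f j ≠ 0 → b j < f j xb := by
    intro j hj
    have hsum : N * b j < ∑ k, f j (xs k) := by
      have : ∑ k : ι, b j < ∑ k, f j (xs k) := by
        apply Finset.sum_lt_sum (fun k _ => hxs1 k j) ⟨j, Finset.mem_univ j, hxs2 j hj⟩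
      simpa [mul_comm, hN] using this
    have heq : f j xb = N⁻¹ * ∑ k, f j (xs k) := by
      simp [hxb, map_smul, map_sum]
    rw [heq]
    have h2 := mul_lt_mul_of_pos_left hsum (inv_pos.mpr hNpos)
    have h3 : N⁻¹ * (N * b j) = b j := by field_simp
    linarith
  -- maximizers on the nonempty tight faces
  have hm : ∀ j : ι, ∃ m : E, (f j ≠ 0 ∧ ∃ w, (∀ i, b i ≤ f i w) ∧ f j w = b j) →
      ((∀ i, b i ≤ f i m) ∧ f j m = b j ∧
        ∀ y, (∀ i, b i ≤ f i y) → f j y = b j → l y ≤ l m) := by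
    intro j
    by_cases hc : f j ≠ 0 ∧ ∃ w, (∀ i, b i ≤ f i w) ∧ f j w = b j
    · obtain ⟨hj, w, hw, hwj⟩ := hc
      obtain ⟨m, h1, h2, h3⟩ := reduce j hj w hw hwj
      exact ⟨m, fun _ => ⟨h1, h2, h3⟩⟩
    · exact ⟨x₀, fun h => absurd h hc⟩
  choose ms hms using hm
  set T : Finset ι :=
    Finset.univ.filter (fun j => f j ≠ 0 ∧ ∃ w, (∀ i, b i ≤ f i w) ∧ f j w = b j) with hT
  set s : Finset E := insert xb (T.image ms) with hs
  obtain ⟨xm, hxms, hxmmax⟩ := s.exists_max_image l ⟨xb, Finset.mem_insert_self _ _⟩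
  have hxmfeas : ∀ i, b i ≤ f i xm := by
    rcases Finset.mem_insert.mp hxms with h | h
    · rw [h]; exact hxbfeas
    · obtain ⟨j, hjT, hjeq⟩ := Finset.mem_image.mp h
      have := (hms j (by simpa [hT] using hjT)).1
      rwa [hjeq] at this
  refine ⟨xm, hxmfeas, ?_⟩
  intro y hy
  rcases le_or_gt (l y) (l xb) with hcase | hcase
  · exact hcase.trans (hxmmax xb (Finset.mem_insert_self _ _))
  set d : E := y - xb with hd
  have hld : 0 < l d := by
    simp only [hd, map_sub]; linarith
  have hNd : ∃ j, f j d < 0 := by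
    by_contra h
    push_neg at h
    exact absurd (hcone d h) (by linarith)
  set Nd : Finset ι := Finset.univ.filter (fun j => f j d < 0) with hNdset
  have hNdne : Nd.Nonempty := by
    obtain ⟨j, hj⟩ := hNd
    exact ⟨j, by simp [hNdset, hj]⟩
  obtain ⟨j₀, hj₀Nd, hj₀min⟩ :=
    Nd.exists_min_image (fun j => (f j xb - b j) / (-(f j d))) hNdne
  have hNdprop : ∀ j ∈ Nd, f j d < 0 := fun j hj => by
    simpa [hNdset] using (Finset.mem_filter.mp hj).2
  have hNdslater : ∀ j ∈ Nd, b j < f j xb := by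
    intro j hj
    refine hxbslater j fun h0 => ?_
    have := hNdprop j hj
    rw [h0] at this
    simp at this
  have hratio_ge1 : ∀ j ∈ Nd, 1 ≤ (f j xb - b j) / (-(f j d)) := by
    intro j hj
    have hjd := hNdprop j hj
    have hyj := hy j
    have : f j y = f j xb + f j d := by
      simp [hd, map_sub]
    rw [one_le_div (by linarith)]
    linarith
  set t : ℝ := (f j₀ xb - b j₀) / (-(f j₀ d)) with htdef
  have hj₀d := hNdprop j₀ hj₀Nd
  have ht1 : 1 ≤ t := hratio_ge1 j₀ hj₀Nd
  have htcancel : t * (-(f j₀ d)) = f j₀ xb - b j₀ :=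
    div_mul_cancel₀ _ (by linarith : -(f j₀ d) ≠ 0)
  set z : E := xb + t • d with hz
  have hzval : ∀ (g : E →ₗ[ℝ] ℝ), g z = g xb + t * g d := by
    intro g; simp [hz, map_add, map_smul]
  have hzfeas : ∀ i, b i ≤ f i z := by
    intro i
    rw [hzval (f i)]
    rcases le_or_gt 0 (f i d) with hid | hid
    · have := hxbfeas i
      nlinarith
    · have hiNd : i ∈ Nd := by simp [hNdset, hid]
      have hmin := hj₀min i hiNd
      have hic : ((f i xb - b i) / (-(f i d))) * (-(f i d)) = f i xb - b i :=
        div_mul_cancel₀ _ (by linarith : -(f i d) ≠ 0)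
      nlinarith
  have hztight : f j₀ z = b j₀ := by
    rw [hzval (f j₀)]
    nlinarith
  have hlz : l y ≤ l z := by
    rw [hzval l]
    have : l y = l xb + l d := by simp [hd, map_sub]
    nlinarith
  have hj₀T : j₀ ∈ T := by
    simp only [hT, Finset.mem_filter, Finset.mem_univ, true_and]
    refine ⟨fun h0 => ?_, z, hzfeas, hztight⟩
    rw [h0] at hj₀d; simp at hj₀d
  have hmsj := hms j₀ (by simpa [hT] using hj₀T)
  have h1 : l z ≤ l (ms j₀) := hmsj.2.2 z hzfeas hztight
  have h2 : l (ms j₀) ≤ l xm :=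
    hxmmax (ms j₀) (Finset.mem_insert_of_mem (Finset.mem_image_of_mem ms hj₀T))
  linarith

/-- Every nonempty exposed face `σ` of the recession cone of a nonempty H-polyhedron
`P` is the recession cone of some nonempty exposed face `F` of `P`. -/
theorem exists_exposed_face_with_recCone
    {E : Type*} [NormedAddCommGroup E] [NormedSpace ℝ E] [FiniteDimensional ℝ E]
    (P : Set E) (hP : P.Nonempty) (hpoly : IsHPolyhedron P)
    (σ : Set E) (hσne : σ.Nonempty) (hσ : IsExposed ℝ (recCone P) σ) :
    ∃ F : Set E, F.Nonempty ∧ IsExposed ℝ P F ∧ recCone F = σ := by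
  obtain ⟨ι, hfin, f, b, hPeq⟩ := hpoly
  subst hPeq
  have hC : recCone {x : E | ∀ i, b i ≤ f i x} = {v : E | ∀ i, 0 ≤ f i v} :=
    recCone_halfspaces f b hP
  obtain ⟨l, hl⟩ := hσ hσne
  obtain ⟨v₀, hv₀⟩ := hσne
  have hv₀' : v₀ ∈ recCone {x : E | ∀ i, b i ≤ f i x} ∧
      ∀ w ∈ recCone {x : E | ∀ i, b i ≤ f i x}, l w ≤ l v₀ := by
    have := hv₀; rw [hl] at this; exact this
  have h0mem : (0 : E) ∈ recCone {x : E | ∀ i, b i ≤ f i x} := by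
    rw [hC]; intro i; simp
  have h2mem : (2 : ℝ) • v₀ ∈ recCone {x : E | ∀ i, b i ≤ f i x} := by
    rw [hC]
    intro i
    have : 0 ≤ f i v₀ := by
      have := hv₀'.1; rw [hC] at this; exact this i
    simp only [map_smul, smul_eq_mul]
    linarith
  have hlv₀ : l v₀ = 0 := by
    have h1 : l ((2 : ℝ) • v₀) ≤ l v₀ := hv₀'.2 _ h2mem
    have h2 : l (0 : E) ≤ l v₀ := hv₀'.2 _ h0mem
    simp only [map_smul, smul_eq_mul, map_zero] at h1 h2
    linarith
  have hneg : ∀ w ∈ recCone {x : E | ∀ i, b i ≤ f i x}, l w ≤ 0 := by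
    intro w hw
    have := hv₀'.2 w hw
    linarith [hlv₀]
  have hσchar : ∀ v, v ∈ σ ↔ ((∀ i, 0 ≤ f i v) ∧ 0 ≤ l v) := by
    intro v
    rw [hl]
    constructor
    · rintro ⟨hv1, hv2⟩
      have hv1' : ∀ i, 0 ≤ f i v := by rw [hC] at hv1; exact hv1
      exact ⟨hv1', by simpa using hv2 0 h0mem⟩
    · rintro ⟨hv1, hv2⟩
      have hv1' : v ∈ recCone {x : E | ∀ i, b i ≤ f i x} := by rw [hC]; exact hv1
      exact ⟨hv1', fun w hw => (hneg w hw).trans hv2⟩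
  -- attainment of the max of l on P
  obtain ⟨xm, hxm1, hxm2⟩ := lp_attain (Module.finrank ℝ E) E le_rfl ι f b l.toLinearMap
    hP (fun v hv => by
      have : v ∈ recCone {x : E | ∀ i, b i ≤ f i x} := by rw [hC]; exact hv
      exact hneg v this)
  refine ⟨{x ∈ {x : E | ∀ i, b i ≤ f i x} | ∀ y ∈ {x : E | ∀ i, b i ≤ f i x}, l y ≤ l x},
    ⟨xm, hxm1, fun y hy => hxm2 y hy⟩, fun _ => ⟨l, rfl⟩, ?_⟩
  -- identify F as an H-polyhedron indexed by Option ι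
  have hFeq : {x ∈ {x : E | ∀ i, b i ≤ f i x} | ∀ y ∈ {x : E | ∀ i, b i ≤ f i x}, l y ≤ l x}
      = {x : E | ∀ o : Option ι, Option.elim o (l xm) b ≤ Option.elim o l.toLinearMap f x} := by
    ext x
    simp only [Set.mem_setOf_eq, Set.mem_sep_iff]
    constructor
    · rintro ⟨hx1, hx2⟩ o
      cases o with
      | none => exact hx2 xm hxm1
      | some i => exact hx1 i
    · intro h
      refine ⟨fun i => h (some i), fun y hy => ?_⟩
      have h1 := h none
      simp only [Option.elim] at h1
      exact (hxm2 y hy).trans h1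
  rw [hFeq, recCone_halfspaces _ _ ⟨xm, by
    intro o
    cases o with
    | none => exact le_refl _
    | some i => exact hxm1 i⟩]
  ext v
  simp only [Set.mem_setOf_eq]
  rw [hσchar v]
  constructor
  · intro h
    exact ⟨fun i => h (some i), h none⟩
  · rintro ⟨h1, h2⟩ o
    cases o with
    | none => exact h2
    | some i => exact h1 i
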